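/- arXiv:0807.4801 — 4 statements merged into one kernel-verified Lean document; each statement's English description precedes it below -/
import Mathlib

section
/- Let A_Γ be a right-angled Artin group, let a, b, x be letters (generators or their inverses) with a dominating b, a ≠ b, and suppose the one-term partial conjugation c_{x,Y} (conjugating each element of a set Y of generators by x) is an automorphism of A_Γ. If a ∈ Y, b ∉ Y ∪ {x, x⁻¹}, then τ_{a,b} c_{x,Y} τ_{a,b}^{-1} = c_{x,Y} τ_{[x,a],b}, where τ_{a,b} is the transvection b ↦ ba and τ_{[x,a],b} is the automorphism b ↦ b[x,a] fixing all other generators. -/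
open scoped commutatorElement

/-- The defining relators of the right-angled Artin group of a simplicial graph `Γ`. -/
def raagRels {V : Type*} (Γ : SimpleGraph V) : Set (FreeGroup V) :=
  {r | ∃ x y : V, Γ.Adj x y ∧ r = ⁅FreeGroup.of x, FreeGroup.of y⁆}

/-- The right-angled Artin group `A_Γ` of a simplicial graph `Γ`. -/
abbrev RAAG {V : Type*} (Γ : SimpleGraph V) : Type _ := PresentedGroup (raagRels Γ)

/-- The generator of `A_Γ` corresponding to a vertex `v`. -/
def raagGen {V : Type*} (Γ : SimpleGraph V) (v : V) : RAAG Γ := PresentedGroup.of v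

/-- Domination: `a ≥ b` iff `lk(b) ⊆ st(a)`. -/
def Dominates {V : Type*} (Γ : SimpleGraph V) (a b : V) : Prop :=
  ∀ v : V, Γ.Adj b v → (v = a ∨ Γ.Adj a v)

/-- if `a ≥ b`, `a ≠ b`, `Y` is a union of connected components of
`Γ - st(x)` with `a ∈ Y`, `b ∉ Y ∪ {x}`, then
`τ_{a,b} ∘ c_{x,Y} ∘ τ_{a,b}⁻¹ = c_{x,Y} ∘ τ_{[x,a],b}`, where `τ_{a,b} : b ↦ ba`,
`c_{x,Y}` conjugates the generators in `Y` by `x`, and `τ_{[x,a],b} : b ↦ b[x,a]`. -/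
theorem stmt8 {V : Type*} (Γ : SimpleGraph V) (a b x : V)
    (hdom : Dominates Γ a b) (hab : a ≠ b)
    (Y : Set V)
    (hYst : ∀ y ∈ Y, y ≠ x ∧ ¬ Γ.Adj x y)
    (hYcomp : ∀ y ∈ Y, ∀ z : V, Γ.Adj y z → (z = x ∨ Γ.Adj x z ∨ z ∈ Y))
    (haY : a ∈ Y) (hbY : b ∉ Y) (hbx : b ≠ x)
    (τ c t : MulAut (RAAG Γ))
    (hτ1 : τ (raagGen Γ b) = raagGen Γ b * raagGen Γ a)
    (hτ2 : ∀ v : V, v ≠ b → τ (raagGen Γ v) = raagGen Γ v)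
    (hc1 : ∀ y ∈ Y, c (raagGen Γ y) = (raagGen Γ x)⁻¹ * raagGen Γ y * raagGen Γ x)
    (hc2 : ∀ v : V, v ∉ Y → c (raagGen Γ v) = raagGen Γ v)
    (ht1 : t (raagGen Γ b) = raagGen Γ b * ⁅raagGen Γ x, raagGen Γ a⁆)
    (ht2 : ∀ v : V, v ≠ b → t (raagGen Γ v) = raagGen Γ v) :
    τ * c * τ⁻¹ = c * t := by
  have key : (τ * c * τ⁻¹ : MulAut (RAAG Γ)).toMonoidHom
      = (c * t : MulAut (RAAG Γ)).toMonoidHom := by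
    apply PresentedGroup.ext
    intro v
    have hxY : x ∉ Y := fun h => (hYst x h).1 rfl
    have hcx : c (raagGen Γ x) = raagGen Γ x := hc2 x hxY
    have hca : c (raagGen Γ a) = (raagGen Γ x)⁻¹ * raagGen Γ a * raagGen Γ x := hc1 a haY
    have hcb : c (raagGen Γ b) = raagGen Γ b := hc2 b hbY
    have hτinv : τ⁻¹ (raagGen Γ b) = raagGen Γ b * (raagGen Γ a)⁻¹ := by
      apply τ.injective
      have : τ ((τ⁻¹ : MulAut (RAAG Γ)) (raagGen Γ b)) = raagGen Γ b := τ.apply_symm_apply _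
      rw [this, map_mul, map_inv, hτ1, hτ2 a hab, mul_assoc, mul_inv_cancel, mul_one]
    show τ (c (τ⁻¹ (PresentedGroup.of v))) = c (t (PresentedGroup.of v))
    change τ (c (τ⁻¹ (raagGen Γ v))) = c (t (raagGen Γ v))
    by_cases hv : v = b
    · subst hv
      rw [hτinv, ht1]
      simp only [map_mul, map_inv, commutatorElement_def, hτ1, hτ2 a hab,
        hτ2 x (Ne.symm hbx), hcb, hcx, hca]
      group
    · rw [ht2 v hv]
      have : τ⁻¹ (raagGen Γ v) = raagGen Γ v := by
        apply τ.injective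
        have h1 : τ ((τ⁻¹ : MulAut (RAAG Γ)) (raagGen Γ v)) = raagGen Γ v :=
          τ.apply_symm_apply _
        rw [h1, hτ2 v hv]
      rw [this]
      by_cases hvY : v ∈ Y
      · have hvb : v ≠ b := hv
        rw [hc1 v hvY, map_mul, map_mul, map_inv, hτ2 x (Ne.symm hbx), hτ2 v hv]
      · rw [hc2 v hvY, hτ2 v hv]
  ext g
  exact DFunLike.congr_fun key g
end

section
/- Let A_Γ be a right-angled Artin group and let a, b, x be distinct generators with a ≥ b, x ≥ b. Then the transvection τ_{a,b} (b ↦ ba) conjugates the automorphism τ_{[x,y],b} as follows: τ_{a,b} τ_{[x,y],b} τ_{a,b}^{-1} = c_{a,{b}} τ_{[x,y],b} c_{a,{b}}^{-1}, where y is a generator with y ≥ b, y ∉ {x,a,b}, and c_{a,{b}} is the partial conjugation b ↦ a⁻¹ba. -/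
open scoped commutatorElement

/-- for distinct generators `a, b, x` with `a ≥ b`, `x ≥ b`, and a generator
`y ∉ {x, a, b}` with `y ≥ b`, the transvection `τ_{a,b} : b ↦ ba` conjugates
`τ_{[x,y],b} : b ↦ b[x,y]` as `τ_{a,b} τ_{[x,y],b} τ_{a,b}⁻¹ = c_{a,{b}} τ_{[x,y],b} c_{a,{b}}⁻¹`,
where `c_{a,{b}} : b ↦ a⁻¹ba`. -/
theorem stmt10 {V : Type*} (Γ : SimpleGraph V) (a b x y : V)
    (hab : a ≠ b) (hax : a ≠ x) (hbx : b ≠ x)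
    (hya : y ≠ a) (hyb : y ≠ b) (hyx : y ≠ x)
    (hdomab : Dominates Γ a b) (hdomxb : Dominates Γ x b) (hdomyb : Dominates Γ y b)
    (τ t c : MulAut (RAAG Γ))
    (hτ1 : τ (raagGen Γ b) = raagGen Γ b * raagGen Γ a)
    (hτ2 : ∀ v : V, v ≠ b → τ (raagGen Γ v) = raagGen Γ v)
    (ht1 : t (raagGen Γ b) = raagGen Γ b * ⁅raagGen Γ x, raagGen Γ y⁆)
    (ht2 : ∀ v : V, v ≠ b → t (raagGen Γ v) = raagGen Γ v)
    (hc1 : c (raagGen Γ b) = (raagGen Γ a)⁻¹ * raagGen Γ b * raagGen Γ a)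
    (hc2 : ∀ v : V, v ≠ b → c (raagGen Γ v) = raagGen Γ v) :
    τ * t * τ⁻¹ = c * t * c⁻¹ := by
  -- inverse formulas
  have hτinv1 : τ⁻¹ (raagGen Γ b) = raagGen Γ b * (raagGen Γ a)⁻¹ := by
    apply τ.injective
    rw [MulAut.apply_inv_self, map_mul, map_inv, hτ1, hτ2 a hab]
    group
  have hτinv2 : ∀ v : V, v ≠ b → τ⁻¹ (raagGen Γ v) = raagGen Γ v := by
    intro v hv
    apply τ.injective
    rw [MulAut.apply_inv_self, hτ2 v hv]
  have hcinv1 : c⁻¹ (raagGen Γ b) = raagGen Γ a * raagGen Γ b * (raagGen Γ a)⁻¹ := by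
    apply c.injective
    rw [MulAut.apply_inv_self, map_mul, map_mul, map_inv, hc1, hc2 a hab]
    group
  apply MulEquiv.toMonoidHom_injective
  apply PresentedGroup.ext
  intro v
  show (τ * t * τ⁻¹) (raagGen Γ v) = (c * t * c⁻¹) (raagGen Γ v)
  simp only [MulAut.mul_apply]
  by_cases hv : v = b
  · subst hv
    have hx : t (raagGen Γ x) = raagGen Γ x := ht2 x (Ne.symm hbx)
    have hy : t (raagGen Γ y) = raagGen Γ y := ht2 y hyb
    simp only [hτinv1, hcinv1, map_mul, map_inv, ht1, ht2 a hab, hc1, hc2 a hab,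
      hτ1, hτ2 a hab, commutatorElement_def, hx, hy, hc2 x (Ne.symm hbx), hc2 y hyb,
      hτ2 x (Ne.symm hbx), hτ2 y hyb]
    group
  · rw [hτinv2 v hv, ht2 v hv, hτ2 v hv]
    have : c⁻¹ (raagGen Γ v) = raagGen Γ v := by
      apply c.injective; rw [MulAut.apply_inv_self, hc2 v hv]
    rw [this, ht2 v hv, hc2 v hv]
end

section
/- Let α ∈ Aut(A_Γ) be a product of dominated transvections, partial conjugations, and inversions (i.e. α lies in the pure automorphism group Aut⁰(A_Γ)), and let α_* be the induced automorphism of the abelianization H_Γ with matrix entries ⟨α_* b, a⟩ relative to the vertex basis. Then for vertices a, b: if ⟨α_* b, a⟩ ≠ 0 then a = b or a ≥ b (a dominates b, i.e. lk(b) ⊆ st(a)). -/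
open scoped commutatorElement

/-- The coordinate of the image of an element of `A_Γ` in the abelianization `H_Γ`
with respect to the basis vector given by the vertex `a` (written multiplicatively):
the homomorphism `A_Γ → ℤ` sending the generator `a ↦ 1` and all other generators to `0`. -/
def coordHom {V : Type*} [DecidableEq V] (Γ : SimpleGraph V) (a : V) :
    RAAG Γ →* Multiplicative ℤ :=
  PresentedGroup.toGroup
    (f := fun v => if v = a then Multiplicative.ofAdd 1 else 1)
    (by
      rintro r ⟨x, y, hxy, rfl⟩
      rw [map_commutatorElement]
      exact commutatorElement_eq_one_iff_commute.mpr (Commute.all _ _))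

/-- The Laurence–Servatius generators of the pure automorphism group `Aut⁰(A_Γ)`:
dominated transvections (with letters as multipliers and acted letters), partial
conjugations, and inversions. -/
def PureGens {V : Type*} (Γ : SimpleGraph V) : Set (MulAut (RAAG Γ)) :=
  {φ | -- dominated transvections τ_{x,y} for letters x ≥ y
       (∃ (p q : V × Bool), p.1 ≠ q.1 ∧ Dominates Γ p.1 q.1 ∧
          φ ((if q.2 then raagGen Γ q.1 else (raagGen Γ q.1)⁻¹)) =
            (if q.2 then raagGen Γ q.1 else (raagGen Γ q.1)⁻¹) *
              (if p.2 then raagGen Γ p.1 else (raagGen Γ p.1)⁻¹) ∧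
          ∀ v : V, v ≠ q.1 → φ (raagGen Γ v) = raagGen Γ v) ∨
       -- partial conjugations c_{x,Y}
       (∃ (x : V) (Y : Set V),
          (∀ y ∈ Y, y ≠ x ∧ ¬ Γ.Adj x y) ∧
          (∀ y ∈ Y, ∀ z : V, Γ.Adj y z → (z = x ∨ Γ.Adj x z ∨ z ∈ Y)) ∧
          (∀ y ∈ Y, φ (raagGen Γ y) = (raagGen Γ x)⁻¹ * raagGen Γ y * raagGen Γ x) ∧
          (∀ v : V, v ∉ Y → φ (raagGen Γ v) = raagGen Γ v)) ∨
       -- inversions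
       (∃ x : V, φ (raagGen Γ x) = (raagGen Γ x)⁻¹ ∧
          ∀ v : V, v ≠ x → φ (raagGen Γ v) = raagGen Γ v)}

section Aux

variable {V : Type*} [DecidableEq V] (Γ : SimpleGraph V)

lemma coordHom_gen (a v : V) :
    coordHom Γ a (raagGen Γ v) = if v = a then Multiplicative.ofAdd 1 else 1 :=
  PresentedGroup.toGroup.of _

/-- the relation `a = b ∨ a ≥ b` -/
def RelD (a b : V) : Prop := a = b ∨ Dominates Γ a b

lemma RelD.refl (a : V) : RelD Γ a a := Or.inl rfl

lemma dom_trans {a b c : V} (h1 : Dominates Γ a c) (h2 : Dominates Γ c b) :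
    Dominates Γ a b := by
  intro v hv
  rcases h2 v hv with rfl | hvc
  · -- v = c, c adj b, so b ∈ lk c ⊆ st a
    rcases h1 b hv.symm with h3 | hab
    · subst h3; exact Or.inr hv
    · rcases h2 a hab.symm with h4 | hac
      · exact Or.inl h4.symm
      · exact Or.inr hac.symm
  · rcases h1 v hvc with rfl | h
    · exact Or.inl rfl
    · exact Or.inr h

lemma RelD.trans {a b c : V} (h1 : RelD Γ a c) (h2 : RelD Γ c b) : RelD Γ a b := by
  rcases h1 with rfl | h1
  · exact h2
  rcases h2 with rfl | h2
  · exact Or.inr h1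
  · exact Or.inr (dom_trans Γ h1 h2)

/-- the key property of an automorphism: support of matrix entries -/
def QProp (φ : MulAut (RAAG Γ)) : Prop :=
  ∀ (a : V) (g : RAAG Γ), coordHom Γ a (φ g) ≠ 1 →
    ∃ c : V, coordHom Γ c g ≠ 1 ∧ RelD Γ a c

lemma QProp.one : QProp Γ 1 := fun a g h => ⟨a, h, RelD.refl Γ a⟩

lemma QProp.mul {φ ψ : MulAut (RAAG Γ)} (hφ : QProp Γ φ) (hψ : QProp Γ ψ) :
    QProp Γ (φ * ψ) := by
  intro a g h
  obtain ⟨c, hc, hac⟩ := hφ a (ψ g) h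
  obtain ⟨d, hd, hcd⟩ := hψ c g hc
  exact ⟨d, hd, RelD.trans Γ hac hcd⟩

/-- from "Nice" data to QProp -/
lemma QProp.of_nice {φ : MulAut (RAAG Γ)}
    (h : ∀ a : V, ∃ (y : V) (k : ℤ),
      (∀ g, coordHom Γ a (φ g) = coordHom Γ a g * (coordHom Γ y g) ^ k) ∧
      (k ≠ 0 → RelD Γ a y)) : QProp Γ φ := by
  intro a g hg
  obtain ⟨y, k, h1, h2⟩ := h a
  by_cases ha : coordHom Γ a g = 1
  · refine ⟨y, ?_, h2 ?_⟩
    · intro hy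
      exact hg (by rw [h1 g, ha, hy, one_zpow, one_mul])
    · intro hk
      exact hg (by rw [h1 g, ha, hk, zpow_zero, one_mul])
  · exact ⟨a, ha, RelD.refl Γ a⟩

/-- equal on generators implies equal (for maps to a group) -/
lemma hom_eq {M : Type*} [Group M] (f g : RAAG Γ →* M)
    (h : ∀ v, f (raagGen Γ v) = g (raagGen Γ v)) (x : RAAG Γ) : f x = g x :=
  DFunLike.congr_fun (PresentedGroup.ext h) x

/-- Nice data for a transvection-like automorphism -/
lemma nice_of_transvection {φ : MulAut (RAAG Γ)} {x y : V} {m : ℤ}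
    (hdom : Dominates Γ x y)
    (hfix : ∀ v : V, v ≠ y → φ (raagGen Γ v) = raagGen Γ v)
    (hq : ∀ a : V, coordHom Γ a (φ (raagGen Γ y))
        = coordHom Γ a (raagGen Γ y) * coordHom Γ a (raagGen Γ x) ^ m) :
    ∀ a : V, ∃ (y' : V) (k : ℤ),
      (∀ g, coordHom Γ a (φ g) = coordHom Γ a g * (coordHom Γ y' g) ^ k) ∧
      (k ≠ 0 → RelD Γ a y') := by
  intro a
  refine ⟨y, if x = a then m else 0, ?_, ?_⟩
  · have : (coordHom Γ a).comp φ.toMonoidHom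
        = (coordHom Γ a) * (coordHom Γ y) ^ (if x = a then m else 0) := by
      apply PresentedGroup.ext
      intro v
      show coordHom Γ a (φ (raagGen Γ v))
          = coordHom Γ a (raagGen Γ v) * (coordHom Γ y (raagGen Γ v)) ^ (if x = a then m else 0)
      by_cases hv : v = y
      · subst hv
        rw [hq a, coordHom_gen, coordHom_gen]
        by_cases hxa : x = a <;> simp [hxa, coordHom_gen]
      · rw [hfix v hv, coordHom_gen Γ y v, if_neg hv, one_zpow, mul_one]
    intro g
    exact DFunLike.congr_fun this g
  · intro hk
    by_cases hxa : x = a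
    · subst hxa
      exact Or.inr hdom
    · simp [hxa] at hk

/-- Nice data for an automorphism inducing the identity on homology -/
lemma nice_of_trivial {φ : MulAut (RAAG Γ)}
    (h : ∀ a g, coordHom Γ a (φ g) = coordHom Γ a g) :
    ∀ a : V, ∃ (y' : V) (k : ℤ),
      (∀ g, coordHom Γ a (φ g) = coordHom Γ a g * (coordHom Γ y' g) ^ k) ∧
      (k ≠ 0 → RelD Γ a y') := by
  intro a
  exact ⟨a, 0, fun g => by rw [h, zpow_zero, mul_one], fun hk => absurd rfl hk⟩


/-- coordinate consequence of a letter-level transvection equation -/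
lemma coord_of_letters {φ : MulAut (RAAG Γ)} {x y : V} {m : ℤ} {εy : Bool}
    (hL : φ (if εy then raagGen Γ y else (raagGen Γ y)⁻¹)
        = (if εy then raagGen Γ y else (raagGen Γ y)⁻¹) * (raagGen Γ x) ^ m)
    (a : V) :
    coordHom Γ a (φ (raagGen Γ y))
      = coordHom Γ a (raagGen Γ y) * coordHom Γ a (raagGen Γ x) ^ (if εy then m else -m) := by
  cases εy
  · simp only [if_neg Bool.false_ne_true, Bool.false_eq_true, if_false, map_inv] at hL ⊢
    have h2 := congrArg (coordHom Γ a) hL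
    simp only [map_mul, map_inv, map_zpow] at h2
    have h3 : coordHom Γ a (φ (raagGen Γ y))
        = ((coordHom Γ a (raagGen Γ y))⁻¹ * (coordHom Γ a (raagGen Γ x)) ^ m)⁻¹ := by
      rw [← h2, inv_inv]
    rw [h3, mul_inv_rev, inv_inv, mul_comm, zpow_neg]
  · simp only [if_true] at hL ⊢
    rw [hL, map_mul, map_zpow]

lemma pureGens_good (φ : MulAut (RAAG Γ)) (hφ : φ ∈ PureGens Γ) :
    QProp Γ φ ∧ QProp Γ φ⁻¹ := by
  rcases hφ with ⟨p, q, hne, hdom, hL, hfix⟩ | ⟨x, Y, hY, _, hconj, hfix⟩ | ⟨x, hx, hfix⟩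
  · -- transvection
    set x := p.1
    set y := q.1
    have hxm : (if p.2 then raagGen Γ x else (raagGen Γ x)⁻¹)
        = raagGen Γ x ^ (if p.2 then (1:ℤ) else -1) := by
      cases p.2 <;> simp
    rw [hxm] at hL
    set m : ℤ := if p.2 then (1:ℤ) else -1 with hm
    set L := if q.2 then raagGen Γ y else (raagGen Γ y)⁻¹ with hLdef
    -- φ fixes x
    have hφx : φ (raagGen Γ x) = raagGen Γ x := hfix x hne
    have hfix' : ∀ v : V, v ≠ y → φ⁻¹ (raagGen Γ v) = raagGen Γ v := by
      intro v hv
      conv_lhs => rw [← hfix v hv]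
      exact MulAut.inv_apply_self _ φ _
    have h5 : φ (L * raagGen Γ x ^ (-m)) = L := by
      rw [map_mul, map_zpow, hφx, hL, mul_assoc, ← zpow_add, add_neg_cancel,
        zpow_zero, mul_one]
    have hL' : φ⁻¹ L = L * raagGen Γ x ^ (-m) := by
      conv_lhs => rw [← h5]
      exact MulAut.inv_apply_self _ φ _
    constructor
    · exact QProp.of_nice Γ (nice_of_transvection Γ hdom hfix (coord_of_letters Γ hL))
    · exact QProp.of_nice Γ (nice_of_transvection Γ hdom hfix' (coord_of_letters Γ hL'))
  · -- partial conjugation: trivial on homology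
    have htriv : ∀ (a : V) (g : RAAG Γ), coordHom Γ a (φ g) = coordHom Γ a g := by
      intro a
      apply hom_eq Γ ((coordHom Γ a).comp φ.toMonoidHom) (coordHom Γ a)
      intro v
      by_cases hv : v ∈ Y
      · show coordHom Γ a (φ (raagGen Γ v)) = _
        rw [hconj v hv]
        simp only [map_mul, map_inv]
        rw [mul_comm, ← mul_assoc, mul_inv_cancel, one_mul]
      · show coordHom Γ a (φ (raagGen Γ v)) = _
        rw [hfix v hv]
    have htriv' : ∀ (a : V) (g : RAAG Γ), coordHom Γ a (φ⁻¹ g) = coordHom Γ a g := by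
      intro a g
      conv_rhs => rw [← MulAut.apply_inv_self _ φ g]
      rw [htriv]
    exact ⟨QProp.of_nice Γ (nice_of_trivial Γ htriv),
      QProp.of_nice Γ (nice_of_trivial Γ htriv')⟩
  · -- inversion
    have hdom : Dominates Γ x x := fun v hv => Or.inr hv
    have hq : ∀ a : V, coordHom Γ a (φ (raagGen Γ x))
        = coordHom Γ a (raagGen Γ x) * coordHom Γ a (raagGen Γ x) ^ (-2 : ℤ) := by
      intro a
      rw [hx, map_inv]
      group
    have hfix' : ∀ v : V, v ≠ x → φ⁻¹ (raagGen Γ v) = raagGen Γ v := by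
      intro v hv
      conv_lhs => rw [← hfix v hv]
      exact MulAut.inv_apply_self _ φ _
    have hx' : φ⁻¹ (raagGen Γ x) = (raagGen Γ x)⁻¹ := by
      have h5 : φ ((raagGen Γ x)⁻¹) = raagGen Γ x := by rw [map_inv, hx, inv_inv]
      conv_lhs => rw [← h5]
      exact MulAut.inv_apply_self _ φ _
    have hq' : ∀ a : V, coordHom Γ a (φ⁻¹ (raagGen Γ x))
        = coordHom Γ a (raagGen Γ x) * coordHom Γ a (raagGen Γ x) ^ (-2 : ℤ) := by
      intro a
      rw [hx', map_inv]
      group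
    exact ⟨QProp.of_nice Γ (nice_of_transvection Γ hdom hfix hq),
      QProp.of_nice Γ (nice_of_transvection Γ hdom hfix' hq')⟩

end Aux

/-- if `α` lies in the pure automorphism group `Aut⁰(A_Γ)` (generated by
dominated transvections, partial conjugations and inversions) and the matrix entry
`⟨α_* b, a⟩` of the induced automorphism of `H_Γ` is nonzero, then `a = b` or `a ≥ b`. -/
theorem stmt13 {V : Type*} [DecidableEq V] (Γ : SimpleGraph V)
    (α : MulAut (RAAG Γ)) (hα : α ∈ Subgroup.closure (PureGens Γ))
    (a b : V) (h : coordHom Γ a (α (raagGen Γ b)) ≠ 1) :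
    a = b ∨ Dominates Γ a b := by
  have key : QProp Γ α ∧ QProp Γ α⁻¹ := by
    refine Subgroup.closure_induction (p := fun φ _ => QProp Γ φ ∧ QProp Γ φ⁻¹)
      (fun φ hφ => pureGens_good Γ φ hφ) ⟨QProp.one Γ, by rw [inv_one]; exact QProp.one Γ⟩
      (fun φ ψ _ _ hφ hψ => ⟨QProp.mul Γ hφ.1 hψ.1, by
        rw [mul_inv_rev]; exact QProp.mul Γ hψ.2 hφ.2⟩)
      (fun φ _ hφ => ⟨hφ.2, by rw [inv_inv]; exact hφ.1⟩) hα
  obtain ⟨c, hc, hac⟩ := key.1 a (raagGen Γ b) h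
  rw [coordHom_gen] at hc
  have hbc : b = c := by by_contra hbc; exact hc (if_neg hbc)
  subst hbc
  exact hac
end

section
/- Let F be the free group on x and y, and let G = (ℤ/2ℤ)⁵ ⋉ K) × ℤ where K = ker(F → ℤ²) is the commutator subgroup of F (with some action of (ℤ/2ℤ)⁵ on K). Then G is not finitely generated. -/
namespace Stmt17Aux

open scoped commutatorElement

noncomputable section

abbrev R : Type := AddMonoidAlgebra (ZMod 2) (ℤ × ℤ)

/-- monomial units -/
def w : Multiplicative (ℤ × ℤ) →* Rˣ where
  toFun v := ⟨AddMonoidAlgebra.single v.toAdd 1, AddMonoidAlgebra.single (-v.toAdd) 1,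
    by rw [AddMonoidAlgebra.single_mul_single]; simp [AddMonoidAlgebra.one_def],
    by rw [AddMonoidAlgebra.single_mul_single]; simp [AddMonoidAlgebra.one_def]⟩
  map_one' := by ext; simp [AddMonoidAlgebra.one_def]
  map_mul' a b := by ext; simp [AddMonoidAlgebra.single_mul_single]

/-- affine 2×2 matrix units -/
def A (p : Rˣ) (q : R) : (Matrix (Fin 2) (Fin 2) R)ˣ where
  val := !![(p : R), q; 0, 1]
  inv := !![((p⁻¹ : Rˣ) : R), -(((p⁻¹ : Rˣ) : R) * q); 0, 1]
  val_inv := by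
    ext i j
    fin_cases i <;> fin_cases j <;>
      simp [Matrix.mul_apply, Fin.sum_univ_two, mul_neg, ← mul_assoc]
  inv_val := by
    ext i j
    fin_cases i <;> fin_cases j <;>
      simp [Matrix.mul_apply, Fin.sum_univ_two, mul_neg, ← mul_assoc]

lemma A_val01 (p : Rˣ) (q : R) : ((A p q : (Matrix (Fin 2) (Fin 2) R)ˣ) : Matrix (Fin 2) (Fin 2) R) 0 1 = q := by
  simp [A]

lemma A_mul (p p' : Rˣ) (q q' : R) :
    A p q * A p' q' = A (p * p') ((p : R) * q' + q) := by
  ext i j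
  fin_cases i <;> fin_cases j <;>
    simp [A, Matrix.mul_apply, Fin.sum_univ_two]

lemma A_one : A 1 0 = 1 := by
  ext i j
  fin_cases i <;> fin_cases j <;> simp [A]

lemma A_inv (p : Rˣ) (q : R) : (A p q)⁻¹ = A p⁻¹ (-(((p⁻¹ : Rˣ) : R) * q)) := by
  ext i j
  rfl

def gens (b : Bool) : Multiplicative (ℤ × ℤ) :=
  Multiplicative.ofAdd (if b then ((1 : ℤ), (0 : ℤ)) else (0, 1))

def ρ : FreeGroup Bool →* Rˣ := FreeGroup.lift fun b => w (gens b)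

def ψ : FreeGroup Bool →* (Matrix (Fin 2) (Fin 2) R)ˣ :=
  FreeGroup.lift fun b => A (w (gens b)) (if b then 1 else 0)

def δ (g : FreeGroup Bool) : R :=
  ((ψ g : (Matrix (Fin 2) (Fin 2) R)ˣ) : Matrix (Fin 2) (Fin 2) R) 0 1

lemma psi_form (g : FreeGroup Bool) : ∃ q, ψ g = A (ρ g) q := by
  induction g using FreeGroup.induction_on with
  | C1 => exact ⟨0, by rw [map_one, map_one, A_one]⟩
  | of b =>
    have hb : (pure b : FreeGroup Bool) = FreeGroup.of b := rfl
    exact ⟨if b then 1 else 0, by simp [ψ, ρ, FreeGroup.lift_apply_of]⟩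
  | inv_of b h =>
    obtain ⟨q, hq⟩ := h
    exact ⟨_, by rw [map_inv, hq, A_inv, ← map_inv]⟩
  | mul x y hx hy =>
    obtain ⟨q, hq⟩ := hx
    obtain ⟨q', hq'⟩ := hy
    exact ⟨_, by rw [map_mul, hq, hq', A_mul, ← map_mul]⟩

lemma psi_eq (g : FreeGroup Bool) : ψ g = A (ρ g) (δ g) := by
  obtain ⟨q, hq⟩ := psi_form g
  have hδ : δ g = q := by rw [δ, hq, A_val01]
  rw [hq, hδ]

lemma delta_mul (g h : FreeGroup Bool) :
    δ (g * h) = ((ρ g : Rˣ) : R) * δ h + δ g := by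
  have : ψ (g * h) = A (ρ g * ρ h) (((ρ g : Rˣ) : R) * δ h + δ g) := by
    rw [map_mul, psi_eq g, psi_eq h, A_mul]
  rw [δ, this, A_val01]

lemma delta_one : δ 1 = 0 := by
  rw [δ, map_one]
  simp [Matrix.one_apply]

lemma rho_ker {k : FreeGroup Bool} (hk : Abelianization.of k = 1) : ρ k = 1 := by
  calc ρ k = Abelianization.lift ρ (Abelianization.of k) := (Abelianization.lift_apply_of ρ k).symm
    _ = 1 := by rw [hk, map_one]

/-- the basic test elements -/
def t (a : ℤ) : FreeGroup Bool :=
  (FreeGroup.of true) ^ a * ⁅FreeGroup.of true, FreeGroup.of false⁆ * (FreeGroup.of true) ^ (-a)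

lemma t_ab (a : ℤ) : Abelianization.of (t a) = 1 := by
  simp only [t, map_mul, map_zpow, map_commutatorElement]
  rw [commutatorElement_eq_one_iff_commute.mpr (Commute.all _ _)]
  group

lemma unit_cancel {u : Rˣ} {z : R} (h : (u : R) * z = 0) : z = 0 := by
  have h2 := congrArg (fun r => ((u⁻¹ : Rˣ) : R) * r) h
  simpa using h2

-- δ of inverses : (ρ g) * δ g⁻¹ + δ g = 0
lemma delta_inv (g : FreeGroup Bool) : ((ρ g : Rˣ) : R) * δ g⁻¹ + δ g = 0 := by
  have := delta_mul g g⁻¹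
  rw [mul_inv_cancel, delta_one] at this
  linear_combination -this

lemma rho_zpow_x (a : ℤ) : ρ ((FreeGroup.of true) ^ a) = w (Multiplicative.ofAdd (a, 0)) := by
  rw [map_zpow]
  have h1 : ρ (FreeGroup.of true) = w (gens true) := by simp [ρ]
  rw [h1, ← map_zpow]
  congr 1
  simp only [gens, if_true]
  rw [← ofAdd_zsmul]
  congr 1
  simp [Prod.smul_def]

lemma delta_x : δ (FreeGroup.of true) = 1 := by
  rw [δ]
  have : ψ (FreeGroup.of true) = A (w (gens true)) 1 := by simp [ψ]
  rw [this, A_val01]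

lemma delta_y : δ (FreeGroup.of false) = 0 := by
  rw [δ]
  have : ψ (FreeGroup.of false) = A (w (gens false)) 0 := by simp [ψ]
  rw [this, A_val01]

lemma delta_comm :
    δ ⁅FreeGroup.of true, FreeGroup.of false⁆ =
      1 - AddMonoidAlgebra.single ((0 : ℤ), (1 : ℤ)) 1 := by
  set x := FreeGroup.of true
  set y := FreeGroup.of false
  have hyi : δ y⁻¹ = 0 := by
    have := delta_inv y
    rw [delta_y, add_zero] at this
    exact unit_cancel this
  have hxi : ((ρ x : Rˣ) : R) * δ x⁻¹ = -1 := by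
    have := delta_inv x
    rw [delta_x] at this
    linear_combination this
  have hc : ⁅x, y⁆ = x * (y * (x⁻¹ * y⁻¹)) := by
    rw [commutatorElement_def]; group
  have hv : ((ρ y : Rˣ) : R) = AddMonoidAlgebra.single ((0 : ℤ), (1 : ℤ)) 1 := by
    have h0 : ρ y = w (gens false) := FreeGroup.lift_apply_of
    rw [h0]; simp [w, gens]
  rw [hc, delta_mul, delta_mul, delta_mul, hyi, delta_x, delta_y, hv]
  linear_combination (AddMonoidAlgebra.single ((0 : ℤ), (1 : ℤ)) (1 : ZMod 2)) * hxi

lemma delta_t (a : ℤ) :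
    δ (t a) = AddMonoidAlgebra.single ((a : ℤ), (0 : ℤ)) 1
      - AddMonoidAlgebra.single ((a : ℤ), (1 : ℤ)) 1 := by
  set x := FreeGroup.of true
  set c := ⁅FreeGroup.of true, FreeGroup.of false⁆
  have hrel : ((ρ (x ^ a) : Rˣ) : R) * δ (x ^ (-a)) + δ (x ^ a) = 0 := by
    have := delta_mul (x ^ a) (x ^ (-a))
    rw [show x ^ a * x ^ (-a) = 1 by group, delta_one] at this
    linear_combination -this
  have hrc : ((ρ c : Rˣ) : R) = 1 := by
    have : ρ c = 1 := rho_ker (by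
      rw [map_commutatorElement]
      exact commutatorElement_eq_one_iff_commute.mpr (Commute.all _ _))
    rw [this, Units.val_one]
  have h1 : δ (t a) = ((ρ (x ^ a) : Rˣ) : R) * (δ c + δ (x ^ (-a))) + δ (x ^ a) := by
    rw [t, mul_assoc, delta_mul, delta_mul, hrc, one_mul]
    ring
  rw [h1]
  have h2 : δ (t a) - ((ρ (x ^ a) : Rˣ) : R) * δ c = 0 := by
    rw [h1]; linear_combination hrel
  have hval : ((ρ (x ^ a) : Rˣ) : R) = AddMonoidAlgebra.single ((a : ℤ), (0 : ℤ)) 1 := by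
    rw [rho_zpow_x]; rfl
  rw [show ((ρ (x ^ a) : Rˣ) : R) * (δ c + δ (x ^ (-a))) + δ (x ^ a)
      = ((ρ (x ^ a) : Rˣ) : R) * δ c
        + (((ρ (x ^ a) : Rˣ) : R) * δ (x ^ (-a)) + δ (x ^ a)) by ring,
    hrel, add_zero, hval, delta_comm]
  rw [mul_sub, mul_one, AddMonoidAlgebra.single_mul_single]
  norm_num

lemma delta_t_coeff (a b : ℤ) :
    (δ (t a)).coeff ((b : ℤ), (0 : ℤ)) = if a = b then 1 else 0 := by
  rw [delta_t]
  rw [AddMonoidAlgebra.coeff_sub, AddMonoidAlgebra.coeff_single, AddMonoidAlgebra.coeff_single, Finsupp.sub_apply, Finsupp.single_apply, Finsupp.single_apply]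
  simp [Prod.ext_iff]

end

theorem K_not_fg (K : Subgroup (FreeGroup Bool))
    (hK : K = MonoidHom.ker
      (Abelianization.of : FreeGroup Bool →* Abelianization (FreeGroup Bool))) :
    ¬ Group.FG ↥K := by
  intro hfg
  have hmem : ∀ g : FreeGroup Bool, g ∈ K ↔ Abelianization.of g = 1 := by
    intro g; rw [hK]; exact MonoidHom.mem_ker
  -- the homomorphisms
  have hρ : ∀ k : ↥K, ρ (k : FreeGroup Bool) = 1 := fun k => rho_ker ((hmem _).mp k.2)
  let χ : ℤ → (↥K →* Multiplicative (ZMod 2)) := fun a =>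
    { toFun := fun k => Multiplicative.ofAdd ((δ (k : FreeGroup Bool)).coeff ((a : ℤ), (0 : ℤ)))
      map_one' := by
        simp only [Subgroup.coe_one, delta_one]
        rfl
      map_mul' := by
        intro k k'
        have : δ ((k : FreeGroup Bool) * (k' : FreeGroup Bool))
            = δ (k : FreeGroup Bool) + δ (k' : FreeGroup Bool) := by
          rw [delta_mul, hρ k, Units.val_one, one_mul, add_comm]
        simp only [Subgroup.coe_mul, this, AddMonoidAlgebra.coeff_add, Finsupp.add_apply, ofAdd_add] }
  have hχinj : Function.Injective χ := by
    intro a b hab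
    have hta : t a ∈ K := (hmem _).mpr (t_ab a)
    have := DFunLike.congr_fun hab (⟨t a, hta⟩ : ↥K)
    simp only [χ, MonoidHom.coe_mk, OneHom.coe_mk] at this
    rw [delta_t_coeff a a, delta_t_coeff a b, if_pos rfl] at this
    by_contra hne
    rw [if_neg hne] at this
    exact one_ne_zero (Multiplicative.ofAdd.injective this)
  -- finiteness of the hom set
  obtain ⟨S, hStop, hSfin⟩ := Group.fg_iff.mp hfg
  haveI : Finite ↥S := hSfin.to_subtype
  have hres : Function.Injective
      (fun (f : ↥K →* Multiplicative (ZMod 2)) (s : ↥S) => f (s : ↥K)) := by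
    intro f g h
    ext k
    have hk : k ∈ Subgroup.closure S := hStop ▸ Subgroup.mem_top k
    refine Subgroup.closure_induction (p := fun x _ => f x = g x)
      (fun x hx => congrFun h ⟨x, hx⟩) (by simp)
      (fun x y _ _ hx hy => by
        rw [map_mul, map_mul, hx, hy])
      (fun x _ hx => by rw [map_inv, map_inv, hx]) hk
  haveI : Finite (↥K →* Multiplicative (ZMod 2)) := Finite.of_injective _ hres
  haveI : Finite ℤ := Finite.of_injective χ hχinj
  exact not_finite ℤ



end Stmt17Aux

/-- Let `F` be the free group on two generators `x, y` and let
`K = ker(F → ℤ²)` be the commutator subgroup (the kernel of the abelianization map).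
Then for any action of `(ℤ/2ℤ)⁵` on `K`, the group `((ℤ/2ℤ)⁵ ⋉ K) × ℤ`
(formalized as `(K ⋊[φ] (ℤ/2ℤ)⁵) × ℤ`) is not finitely generated. -/
theorem stmt17
    (K : Subgroup (FreeGroup Bool))
    (hK : K = MonoidHom.ker
      (Abelianization.of : FreeGroup Bool →* Abelianization (FreeGroup Bool)))
    (φ : Multiplicative (Fin 5 → ZMod 2) →* MulAut ↥K) :
    ¬ Group.FG ((↥K ⋊[φ] Multiplicative (Fin 5 → ZMod 2)) × Multiplicative ℤ) := by
  intro hfg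
  set Q := Multiplicative (Fin 5 → ZMod 2) with hQ
  let π : (↥K ⋊[φ] Q) × Multiplicative ℤ →* Q :=
    SemidirectProduct.rightHom.comp (MonoidHom.fst _ _)
  haveI : Finite Q := Finite.of_equiv (Fin 5 → ZMod 2) Multiplicative.ofAdd
  haveI : Finite π.range := Subtype.finite
  haveI : π.ker.FiniteIndex := Subgroup.finiteIndex_ker π
  haveI : Group.FG ↥π.ker := Subgroup.fg_of_index_ne_zero _
  have hker : ∀ g : ↥π.ker, (g : (↥K ⋊[φ] Q) × Multiplicative ℤ).1.right = 1 := by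
    intro g
    have := g.2
    rw [MonoidHom.mem_ker] at this
    exact this
  let θ : ↥π.ker →* ↥K :=
    { toFun := fun g => (g : (↥K ⋊[φ] Q) × Multiplicative ℤ).1.left
      map_one' := rfl
      map_mul' := by
        intro g h
        show ((g : (↥K ⋊[φ] Q) × Multiplicative ℤ).1 *
          (h : (↥K ⋊[φ] Q) × Multiplicative ℤ).1).left = _
        rw [SemidirectProduct.mul_left, hker g, map_one, MulAut.one_apply] }
  have hθ : Function.Surjective θ := by
    intro k
    refine ⟨⟨((SemidirectProduct.inl k : ↥K ⋊[φ] Q), 1), ?_⟩, rfl⟩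
    simp only [MonoidHom.mem_ker, MonoidHom.comp_apply, MonoidHom.coe_fst, π]
    exact SemidirectProduct.rightHom_inl k
  exact Stmt17Aux.K_not_fg K hK (Group.fg_of_surjective hθ)
end
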